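/- Let N ≥ 1, 1 ≤ N < p < ∞, 0 < s < 1 with sp > N. Define ζ(x) = (1 - |x|^{(sp-N)/(p-1)})_+ on ℝ^N. Then the Hölder seminorm of ζ with exponent α = s - N/p equals 1, i.e. sup_{x≠y} |ζ(x)-ζ(y)|/|x-y|^{s-N/p} = 1. -/

import Mathlib

open MeasureTheory ENNReal Filter Metric Set

noncomputable section

abbrev Euc (N : ℕ) := EuclideanSpace ℝ (Fin N)

/-- Homogeneous Hölder seminorm `[u]_{C^{0,α}(Ω)}`, `ℝ≥0∞`-valued. -/
noncomputable def holderSemi {N : ℕ} (Ω : Set (Euc N)) (α : ℝ) (u : Euc N → ℝ) : ℝ≥0∞ :=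
  ⨆ (x : Ω) (y : Ω) (_ : x.1 ≠ y.1),
    ENNReal.ofReal (|u x.1 - u y.1| / ‖x.1 - y.1‖ ^ α)

/-- `p`-th power of the Gagliardo seminorm `[u]_{W^{s,p}(Ω)}^p`. -/
noncomputable def gagliardoP {N : ℕ} (Ω : Set (Euc N)) (s p : ℝ) (u : Euc N → ℝ) : ℝ≥0∞ :=
  ∫⁻ x in Ω, ∫⁻ y in Ω,
    ENNReal.ofReal (|u x - u y| ^ p / ‖x - y‖ ^ ((N : ℝ) + s * p))

/-- Gagliardo seminorm `[u]_{W^{s,p}(Ω)}`. -/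
noncomputable def gagliardoSemi {N : ℕ} (Ω : Set (Euc N)) (s p : ℝ) (u : Euc N → ℝ) : ℝ≥0∞ :=
  gagliardoP Ω s p u ^ (1 / p)

/-- Subadditivity gives `a^β - b^β ≤ (a-b)^β` for `0 ≤ b ≤ a` and `0 ≤ β ≤ 1`. -/
lemma rpow_abs_sub {a b β : ℝ} (ha : 0 ≤ a) (hb : 0 ≤ b) (hβ0 : 0 ≤ β) (hβ1 : β ≤ 1) :
    |a ^ β - b ^ β| ≤ |a - b| ^ β := by
  wlog hab : b ≤ a generalizing a b
  · rw [abs_sub_comm, abs_sub_comm a b]; exact this hb ha (le_of_not_ge hab)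
  have key : a ^ β ≤ (a - b) ^ β + b ^ β := by
    have h := NNReal.rpow_add_le_add_rpow (a - b).toNNReal b.toNNReal hβ0 hβ1
    have h2 : ((a - b).toNNReal + b.toNNReal : NNReal) = a.toNNReal := by
      rw [← Real.toNNReal_add (by linarith) hb, sub_add_cancel]
    rw [h2] at h
    have := NNReal.coe_le_coe.2 h
    push_cast at this
    rwa [Real.coe_toNNReal _ ha, Real.coe_toNNReal _ hb,
      Real.coe_toNNReal _ (sub_nonneg.2 hab)] at this
  have h1 : 0 ≤ a ^ β - b ^ β := sub_nonneg.2 (Real.rpow_le_rpow hb hab hβ0)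
  rw [abs_of_nonneg h1, abs_of_nonneg (sub_nonneg.2 hab)]
  linarith

/-- The Hölder seminorm of exponent `s - N/p` of the test function
`ζ(x) = (1 - |x|^{(sp-N)/(p-1)})₊` equals `1`. -/
theorem stmt_13 (N : ℕ) (hN : 1 ≤ N) (s p : ℝ) (hs0 : 0 < s) (hs1 : s < 1)
    (hNp : (N : ℝ) < p) (hsp : (N : ℝ) < s * p) :
    holderSemi Set.univ (s - N / p)
      (fun x : Euc N => max (1 - ‖x‖ ^ ((s * p - N) / (p - 1))) 0) = 1 := by
  have hN1 : (1 : ℝ) ≤ N := by exact_mod_cast hN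
  have hp1 : (1 : ℝ) < p := lt_of_le_of_lt hN1 hNp
  have hp0 : (0 : ℝ) < p := by linarith
  set β := (s * p - N) / (p - 1) with hβ
  set α := s - N / p with hα
  have hβ0 : 0 < β := div_pos (by linarith) (by linarith)
  have hβ1 : β < 1 := by
    rw [hβ, div_lt_one (by linarith)]
    nlinarith
  have hα0 : 0 < α := by
    rw [hα, sub_pos, div_lt_iff₀ hp0]; linarith
  have hαβ : α ≤ β := by
    have : α = (s * p - N) / p := by rw [hα, sub_div, mul_div_assoc, div_self hp0.ne', mul_one]
    rw [this, hβ]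
    exact div_le_div_of_nonneg_left (by linarith) (by linarith) (by linarith)
  set ζ : Euc N → ℝ := fun x => max (1 - ‖x‖ ^ β) 0 with hζ
  -- pointwise Hölder bound
  have key : ∀ x y : Euc N, |ζ x - ζ y| ≤ ‖x - y‖ ^ α := by
    intro x y
    have h1 : |ζ x - ζ y| ≤ |‖x‖ ^ β - ‖y‖ ^ β| := by
      have := abs_max_sub_max_le_abs (1 - ‖x‖ ^ β) (1 - ‖y‖ ^ β) 0
      calc |ζ x - ζ y| ≤ |(1 - ‖x‖ ^ β) - (1 - ‖y‖ ^ β)| := this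
        _ = |‖y‖ ^ β - ‖x‖ ^ β| := by ring_nf
        _ = |‖x‖ ^ β - ‖y‖ ^ β| := abs_sub_comm _ _
    have h2 : |‖x‖ ^ β - ‖y‖ ^ β| ≤ |‖x‖ - ‖y‖| ^ β :=
      rpow_abs_sub (norm_nonneg x) (norm_nonneg y) hβ0.le hβ1.le
    have h3 : |‖x‖ - ‖y‖| ^ β ≤ ‖x - y‖ ^ β :=
      Real.rpow_le_rpow (abs_nonneg _) (abs_norm_sub_norm_le x y) hβ0.le
    rcases le_or_gt ‖x - y‖ 1 with hle | hgt
    · have h4 : ‖x - y‖ ^ β ≤ ‖x - y‖ ^ α := by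
        rcases eq_or_lt_of_le (norm_nonneg (x - y)) with h0 | h0
        · rw [← h0, Real.zero_rpow hβ0.ne', Real.zero_rpow hα0.ne']
        · exact Real.rpow_le_rpow_of_exponent_ge h0 hle hαβ
      linarith
    · have hζx : 0 ≤ ζ x := le_max_right _ _
      have hζy : 0 ≤ ζ y := le_max_right _ _
      have hζx1 : ζ x ≤ 1 := max_le (by nlinarith [Real.rpow_nonneg (norm_nonneg x) β]) one_pos.le
      have hζy1 : ζ y ≤ 1 := max_le (by nlinarith [Real.rpow_nonneg (norm_nonneg y) β]) one_pos.le
      have : |ζ x - ζ y| ≤ 1 := abs_sub_le_iff.2 ⟨by linarith, by linarith⟩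
      have h5 : (1 : ℝ) ≤ ‖x - y‖ ^ α := Real.one_le_rpow hgt.le hα0.le
      linarith
  apply le_antisymm
  · -- upper bound
    refine iSup_le fun x => iSup_le fun y => iSup_le fun hxy => ?_
    have hd : 0 < ‖x.1 - y.1‖ := by
      rw [norm_pos_iff, sub_ne_zero]; exact hxy
    have hdp : 0 < ‖x.1 - y.1‖ ^ α := Real.rpow_pos_of_pos hd α
    refine ENNReal.ofReal_le_one.2 ?_
    rw [div_le_one hdp]
    exact key x.1 y.1
  · -- lower bound: take x = 0 and y a unit vector
    have hNpos : 0 < N := hN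
    set e : Euc N := EuclideanSpace.single ⟨0, hNpos⟩ (1 : ℝ) with he
    have hne : ‖e‖ = 1 := by simp [he, EuclideanSpace.norm_single]
    have hene : (0 : Euc N) ≠ e := by
      intro h
      have : ‖e‖ = 0 := by rw [← h]; simp
      rw [hne] at this; norm_num at this
    unfold holderSemi
    refine le_iSup_of_le ⟨(0 : Euc N), mem_univ _⟩
      (le_iSup_of_le ⟨e, mem_univ _⟩ (le_iSup_of_le hene ?_))
    · have hz0 : ζ (0 : Euc N) = 1 := by
        simp [hζ, Real.zero_rpow hβ0.ne']
      have hze : ζ e = 0 := by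
        simp [hζ, hne]
      show (1 : ℝ≥0∞) ≤ ENNReal.ofReal (|ζ (0 : Euc N) - ζ e| / ‖(0 : Euc N) - e‖ ^ α)
      rw [hz0, hze]
      simp [hne, Real.one_rpow, norm_sub_rev (0 : Euc N) e]
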